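/- Let q ≥ 2 be an integer and n ≥ 1. Then Σ_{m=0}^n C_q(n,m) = 2^{{n}}, and Σ_{m=0}^n C_q(n,m)·m·(−1)^{{n−m}} = q^k if n = q^k for some integer k ≥ 0, and this signed sum equals 0 if n is not a power of q. -/

import Mathlib

open Finset

/-- Base-`q` digit sum `{n} = Σ_t n_t`, where `n_t = n / q^t % q`. -/
def digitSum (q n : ℕ) : ℕ := ∑ t ∈ Finset.range (n + 1), n / q ^ t % q

/-- Fractal binomial coefficient `C_q(n,m) = Π_t binom(n_t, m_t)`. -/
def Cq (q n m : ℕ) : ℕ :=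
  ∏ t ∈ Finset.range (n + m + 1), Nat.choose (n / q ^ t % q) (m / q ^ t % q)

section auxlem
variable {q : ℕ}

lemma lt_q_pow (hq : 2 ≤ q) {n t : ℕ} (h : n < t) : n < q ^ t :=
  h.trans ((Nat.lt_two_pow_self (n := t)).trans_le (Nat.pow_le_pow_left hq t))

lemma digitSum_ext (hq : 2 ≤ q) (n : ℕ) {T : ℕ} (hT : n + 1 ≤ T) :
    digitSum q n = ∑ t ∈ Finset.range T, n / q ^ t % q := by
  refine Finset.sum_subset (Finset.range_subset_range.2 hT) fun t ht hnt => ?_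
  have : n < t := by simp only [Finset.mem_range, not_lt] at hnt ⊢; omega
  rw [Nat.div_eq_of_lt (lt_q_pow hq this), Nat.zero_mod]

lemma Cq_ext (hq : 2 ≤ q) (n m : ℕ) {T : ℕ} (hT : n + m + 1 ≤ T) :
    Cq q n m = ∏ t ∈ Finset.range T, Nat.choose (n / q ^ t % q) (m / q ^ t % q) := by
  refine Finset.prod_subset (Finset.range_subset_range.2 hT) fun t ht hnt => ?_
  simp only [Finset.mem_range, not_lt] at hnt
  have hn : n < t := by omega
  have hm : m < t := by omega
  rw [Nat.div_eq_of_lt (lt_q_pow hq hn), Nat.div_eq_of_lt (lt_q_pow hq hm)]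
  simp

lemma digitSum_zero : digitSum q 0 = 0 := by simp [digitSum]

lemma digitSum_rec (hq : 2 ≤ q) (n : ℕ) :
    digitSum q n = n % q + digitSum q (n / q) := by
  rcases Nat.eq_zero_or_pos n with rfl | hn
  · simp [digitSum]
  have hdiv : n / q < n := Nat.div_lt_self hn (by omega)
  rw [digitSum, Finset.sum_range_succ', add_comm]
  congr 1
  · simp
  · rw [digitSum_ext hq (n / q) (T := n) (by omega)]
    refine Finset.sum_congr rfl fun t _ => ?_
    rw [pow_succ', Nat.div_div_eq_div_mul, mul_comm]

lemma Cq_rec (hq : 2 ≤ q) (n m : ℕ) :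
    Cq q n m = Nat.choose (n % q) (m % q) * Cq q (n / q) (m / q) := by
  rcases Nat.eq_zero_or_pos (n + m) with h0 | hpos
  · have hn : n = 0 := by omega
    have hm : m = 0 := by omega
    subst hn; subst hm
    simp [Cq]
  have h1 : n / q + m / q + 1 ≤ n + m := by
    rcases Nat.eq_zero_or_pos n with rfl | hn
    · have : m / q < m := Nat.div_lt_self (by omega) (by omega)
      simp only [Nat.zero_div]
      omega
    · have h2 : n / q < n := Nat.div_lt_self hn (by omega)
      have h3 : m / q ≤ m := Nat.div_le_self m q
      omega
  rw [Cq, Finset.prod_range_succ', mul_comm]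
  congr 1
  · simp
  · rw [Cq_ext hq (n / q) (m / q) (T := n + m) h1]
    refine Finset.prod_congr rfl fun t _ => ?_
    rw [pow_succ', Nat.div_div_eq_div_mul, Nat.div_div_eq_div_mul, mul_comm]

lemma Cq_eq_zero (hq : 2 ≤ q) : ∀ n m : ℕ, n < m → Cq q n m = 0 := by
  intro n m
  induction m using Nat.strong_induction_on generalizing n with
  | _ m ih =>
    intro hlt
    by_contra hne
    rw [Cq_rec hq] at hne
    have h1 : m % q ≤ n % q := by
      by_contra h
      rw [Nat.choose_eq_zero_of_lt (by omega)] at hne; simp at hne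
    have h2 : m / q ≤ n / q := by
      by_contra h
      have hm : 0 < m := by omega
      have := ih (m / q) (Nat.div_lt_self hm (by omega)) (n / q) (by omega)
      rw [this] at hne; simp at hne
    have := Nat.div_add_mod n q
    have := Nat.div_add_mod m q
    have hq0 : 0 < q := by omega
    nlinarith [Nat.mul_le_mul_left q h2]

lemma Cq_zero_right (n : ℕ) : Cq q n 0 = 1 := by
  simp [Cq]

end auxlem

section auxlem2
variable {q : ℕ}

lemma sum_range_mul' {M : Type*} [AddCommMonoid M] (f : ℕ → M) (a b : ℕ) :
    ∑ m ∈ Finset.range (a * b), f m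
      = ∑ j ∈ Finset.range b, ∑ r ∈ Finset.range a, f (a * j + r) := by
  induction b with
  | zero => simp
  | succ b ih =>
    rw [Nat.mul_succ, Finset.sum_range_add, ih, Finset.sum_range_succ]

lemma mod_mul_add (hq : 2 ≤ q) {j r : ℕ} (hr : r < q) : (q * j + r) % q = r := by
  rw [Nat.mul_add_mod, Nat.mod_eq_of_lt hr]

lemma div_mul_add (hq : 2 ≤ q) {j r : ℕ} (hr : r < q) : (q * j + r) / q = j := by
  rw [Nat.mul_add_div (by omega), Nat.div_eq_of_lt hr, Nat.add_zero]

lemma choose_sum_range (hq : 2 ≤ q) {b : ℕ} (hb : b < q) :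
    ∑ r ∈ Finset.range q, Nat.choose b r = 2 ^ b := by
  rw [← Nat.sum_range_choose b]
  refine (Finset.sum_subset (Finset.range_subset_range.2 (by omega)) fun r hr hnr => ?_).symm
  simp only [Finset.mem_range, not_lt] at hnr
  exact Nat.choose_eq_zero_of_lt (by omega)

lemma alt_sum_full (b : ℕ) :
    ∑ r ∈ Finset.range (b + 1), (Nat.choose b r : ℝ) * (-1) ^ (b - r) =
      if b = 0 then 1 else 0 := by
  have h := add_pow (1 : ℝ) (-1) b
  simp only [one_pow, one_mul, add_neg_cancel] at h
  rw [zero_pow_eq] at h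
  rw [h]
  exact Finset.sum_congr rfl fun r _ => by ring

lemma alt_sum (hq : 2 ≤ q) {b : ℕ} (hb : b < q) :
    ∑ r ∈ Finset.range q, (Nat.choose b r : ℝ) * (-1) ^ (b - r) =
      if b = 0 then 1 else 0 := by
  rw [← alt_sum_full b]
  refine (Finset.sum_subset (Finset.range_subset_range.2 (by omega)) fun r hr hnr => ?_).symm
  simp only [Finset.mem_range, not_lt] at hnr
  rw [Nat.choose_eq_zero_of_lt (by omega)]
  simp

lemma alt_sum_weighted (hq : 2 ≤ q) {b : ℕ} (hb : b < q) :
    ∑ r ∈ Finset.range q, (Nat.choose b r : ℝ) * r * (-1) ^ (b - r) =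
      if b = 1 then 1 else 0 := by
  have hsub : ∑ r ∈ Finset.range q, (Nat.choose b r : ℝ) * r * (-1) ^ (b - r)
      = ∑ r ∈ Finset.range (b + 1), (Nat.choose b r : ℝ) * r * (-1) ^ (b - r) := by
    refine (Finset.sum_subset (Finset.range_subset_range.2 (by omega)) fun r hr hnr => ?_).symm
    simp only [Finset.mem_range, not_lt] at hnr
    rw [Nat.choose_eq_zero_of_lt (by omega)]
    simp
  rw [hsub, Finset.sum_range_succ']
  simp only [Nat.cast_zero, mul_zero, zero_mul, add_zero]
  cases b with
  | zero => simp
  | succ d =>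
    have key : ∀ s, ((Nat.choose (d + 1) (s + 1) : ℝ) * (s + 1))
        = (d + 1) * (Nat.choose d s : ℝ) := by
      intro s
      have := Nat.add_one_mul_choose_eq d s
      have h2 : ((d + 1) * Nat.choose d s : ℕ) = (Nat.choose (d + 1) (s + 1) * (s + 1) : ℕ) := by
        simpa [Nat.succ_eq_add_one] using this
      have h3 := congrArg (fun x : ℕ => (x : ℝ)) h2
      push_cast at h3
      linarith [h3]
    have : ∑ s ∈ Finset.range (d + 1),
        ((Nat.choose (d + 1) (s + 1) : ℝ)) * ((s : ℝ) + 1) * (-1) ^ (d - s)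
        = (d + 1) * ∑ s ∈ Finset.range (d + 1), (Nat.choose d s : ℝ) * (-1) ^ (d - s) := by
      rw [Finset.mul_sum]
      refine Finset.sum_congr rfl fun s _ => ?_
      rw [key s]
      ring
    push_cast
    rw [this, alt_sum_full d]
    rcases eq_or_ne d 0 with rfl | hd
    · norm_num
    · rw [if_neg hd, mul_zero]

end auxlem2

section mainlem
variable {q : ℕ}

lemma sumA (hq : 2 ≤ q) : ∀ n K : ℕ, n < q ^ K →
    ∑ m ∈ Finset.range (q ^ K), Cq q n m = 2 ^ digitSum q n := by
  intro n
  induction n using Nat.strong_induction_on with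
  | _ n ih =>
    intro K hK
    rcases Nat.eq_zero_or_pos n with rfl | hn
    · rw [digitSum_zero, pow_zero]
      rw [Finset.sum_eq_single 0]
      · exact Cq_zero_right 0
      · intro m _ hm; exact Cq_eq_zero hq 0 m (by omega)
      · intro h; exact absurd (Finset.mem_range.2 (by positivity)) h
    · obtain ⟨K', rfl⟩ : ∃ K', K = K' + 1 := by
        cases K with
        | zero => simp at hK; omega
        | succ K' => exact ⟨K', rfl⟩
      rw [show q ^ (K' + 1) = q * q ^ K' from by rw [pow_succ, mul_comm], sum_range_mul']
      have hterm : ∀ j ∈ Finset.range (q ^ K'), ∀ r ∈ Finset.range q,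
          Cq q n (q * j + r) = Cq q (n / q) j * Nat.choose (n % q) r := by
        intro j _ r hr
        rw [Cq_rec hq, mod_mul_add hq (Finset.mem_range.1 hr),
          div_mul_add hq (Finset.mem_range.1 hr), mul_comm]
      rw [Finset.sum_congr rfl fun j hj =>
        Finset.sum_congr rfl fun r hr => hterm j hj r hr]
      rw [← Finset.sum_mul_sum]
      have hdivlt : n / q < q ^ K' := by
        rw [Nat.div_lt_iff_lt_mul (by omega), mul_comm, ← pow_succ']
        exact hK
      rw [ih (n / q) (Nat.div_lt_self hn (by omega)) K' hdivlt,
        choose_sum_range hq (Nat.mod_lt n (by omega)),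
        digitSum_rec hq n, pow_add, mul_comm]

lemma sub_digits (hq : 2 ≤ q) {n j r : ℕ} (hr : r < q) (hrb : r ≤ n % q)
    (hj : j ≤ n / q) :
    digitSum q (n - (q * j + r)) = (n % q - r) + digitSum q (n / q - j) := by
  obtain ⟨c, hc⟩ : ∃ c, n / q = j + c := ⟨n / q - j, by omega⟩
  obtain ⟨d, hd⟩ : ∃ d, n % q = r + d := ⟨n % q - r, by omega⟩
  have hn : n = (q * j + r) + (q * c + d) := by
    have := Nat.div_add_mod n q
    rw [hc, hd] at this
    ring_nf
    ring_nf at this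
    omega
  have hsub : n - (q * j + r) = q * c + d := by omega
  have hdq : d < q := by
    have := Nat.mod_lt n (show 0 < q by omega)
    omega
  rw [hsub, digitSum_rec hq (q * c + d), mod_mul_add hq hdq, div_mul_add hq hdq]
  have h1 : n % q - r = d := by omega
  have h2 : n / q - j = c := by omega
  rw [h1, h2]

lemma termE (hq : 2 ≤ q) {n j r : ℕ} (hr : r < q) :
    (Cq q n (q * j + r) : ℝ) * (-1) ^ (digitSum q (n - (q * j + r))) =
      ((Nat.choose (n % q) r : ℝ) * (-1) ^ (n % q - r)) *
        ((Cq q (n / q) j : ℝ) * (-1) ^ (digitSum q (n / q - j))) := by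
  rw [Cq_rec hq, mod_mul_add hq hr, div_mul_add hq hr]
  by_cases h1 : r ≤ n % q
  · by_cases h2 : j ≤ n / q
    · rw [sub_digits hq hr h1 h2]
      push_cast
      rw [pow_add]
      ring
    · rw [Cq_eq_zero hq (n / q) j (by omega)]
      simp
  · rw [Nat.choose_eq_zero_of_lt (by omega)]
    simp

lemma sumE (hq : 2 ≤ q) : ∀ n K : ℕ, n < q ^ K →
    ∑ m ∈ Finset.range (q ^ K), (Cq q n m : ℝ) * (-1) ^ (digitSum q (n - m)) =
      if n = 0 then 1 else 0 := by
  intro n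
  induction n using Nat.strong_induction_on with
  | _ n ih =>
    intro K hK
    rcases Nat.eq_zero_or_pos n with rfl | hn
    · rw [if_pos rfl]
      rw [Finset.sum_eq_single 0]
      · simp [Cq_zero_right, digitSum_zero]
      · intro m _ hm
        rw [Cq_eq_zero hq 0 m (by omega)]
        simp
      · intro h; exact absurd (Finset.mem_range.2 (by positivity)) h
    · rw [if_neg (by omega)]
      obtain ⟨K', rfl⟩ : ∃ K', K = K' + 1 := by
        cases K with
        | zero => simp at hK; omega
        | succ K' => exact ⟨K', rfl⟩
      rw [show q ^ (K' + 1) = q * q ^ K' from by rw [pow_succ, mul_comm], sum_range_mul']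
      have hdivlt : n / q < q ^ K' := by
        rw [Nat.div_lt_iff_lt_mul (by omega), mul_comm, ← pow_succ']
        exact hK
      rw [Finset.sum_congr rfl fun j (hj : j ∈ Finset.range (q ^ K')) =>
        Finset.sum_congr rfl fun r (hr : r ∈ Finset.range q) =>
          (by rw [termE hq (Finset.mem_range.1 hr)]; ring :
            (Cq q n (q * j + r) : ℝ) * (-1) ^ (digitSum q (n - (q * j + r))) =
            ((Cq q (n / q) j : ℝ) * (-1) ^ (digitSum q (n / q - j))) *
              ((Nat.choose (n % q) r : ℝ) * (-1) ^ (n % q - r)))]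
      rw [← Finset.sum_mul_sum]
      rw [ih (n / q) (Nat.div_lt_self hn (by omega)) K' hdivlt,
        alt_sum hq (Nat.mod_lt n (by omega))]
      rcases eq_or_ne (n % q) 0 with hb | hb
      · have : n / q ≠ 0 := by
          intro h0
          have hdm := Nat.div_add_mod n q
          rw [h0, Nat.mul_zero] at hdm
          omega
        rw [if_neg this, zero_mul]
      · rw [if_neg hb, mul_zero]

end mainlem

open scoped Classical in
lemma sumB (hq : 2 ≤ q) : ∀ n K : ℕ, n < q ^ K →
    ∑ m ∈ Finset.range (q ^ K), (Cq q n m : ℝ) * m * (-1) ^ (digitSum q (n - m)) =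
      if ∃ k : ℕ, n = q ^ k then (n : ℝ) else 0 := by
  intro n
  induction n using Nat.strong_induction_on with
  | _ n ih =>
    intro K hK
    rcases Nat.eq_zero_or_pos n with rfl | hn
    · rw [if_neg (by rintro ⟨k, hk⟩; have := pow_pos (show 0 < q by omega) k; omega)]
      refine Finset.sum_eq_zero fun m _ => ?_
      rcases Nat.eq_zero_or_pos m with rfl | hm
      · simp
      · rw [Cq_eq_zero hq 0 m (by omega)]; simp
    · obtain ⟨K', rfl⟩ : ∃ K', K = K' + 1 := by
        cases K with
        | zero => simp at hK; omega
        | succ K' => exact ⟨K', rfl⟩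
      have hdivlt : n / q < q ^ K' := by
        rw [Nat.div_lt_iff_lt_mul (by omega), mul_comm, ← pow_succ']
        exact hK
      have hblt : n % q < q := Nat.mod_lt n (by omega)
      rw [show q ^ (K' + 1) = q * q ^ K' from by rw [pow_succ, mul_comm], sum_range_mul']
      have hterm : ∀ j ∈ Finset.range (q ^ K'), ∀ r ∈ Finset.range q,
          (Cq q n (q * j + r) : ℝ) * ((q * j + r : ℕ) : ℝ)
              * (-1) ^ (digitSum q (n - (q * j + r)))
          = (((Cq q (n / q) j : ℝ) * (-1) ^ (digitSum q (n / q - j))) * ((q : ℝ) * j)) *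
              ((Nat.choose (n % q) r : ℝ) * (-1) ^ (n % q - r)) +
            ((Cq q (n / q) j : ℝ) * (-1) ^ (digitSum q (n / q - j))) *
              (((Nat.choose (n % q) r : ℝ) * (-1) ^ (n % q - r)) * (r : ℝ)) := by
        intro j _ r hr
        have h := termE hq (q := q) (n := n) (j := j) (Finset.mem_range.1 hr)
        calc (Cq q n (q * j + r) : ℝ) * ((q * j + r : ℕ) : ℝ)
              * (-1) ^ (digitSum q (n - (q * j + r)))
            = ((Cq q n (q * j + r) : ℝ) * (-1) ^ (digitSum q (n - (q * j + r))))
                * ((q * j + r : ℕ) : ℝ) := by ring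
          _ = _ := by rw [h]; push_cast; ring
      rw [Finset.sum_congr rfl fun j hj => Finset.sum_congr rfl fun r hr => hterm j hj r hr]
      rw [Finset.sum_congr rfl fun j (_ : j ∈ Finset.range (q ^ K')) => Finset.sum_add_distrib]
      rw [Finset.sum_add_distrib, ← Finset.sum_mul_sum, ← Finset.sum_mul_sum]
      have e1 : ∑ r ∈ Finset.range q, (Nat.choose (n % q) r : ℝ) * (-1) ^ (n % q - r)
          = if n % q = 0 then 1 else 0 := alt_sum hq hblt
      have e2 : ∑ r ∈ Finset.range q,
          ((Nat.choose (n % q) r : ℝ) * (-1) ^ (n % q - r)) * (r : ℝ)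
          = if n % q = 1 then 1 else 0 := by
        rw [← alt_sum_weighted hq hblt]
        exact Finset.sum_congr rfl fun r _ => by ring
      have e3 : ∑ j ∈ Finset.range (q ^ K'),
          ((Cq q (n / q) j : ℝ) * (-1) ^ (digitSum q (n / q - j))) * ((q : ℝ) * j)
          = q * (if ∃ k : ℕ, n / q = q ^ k then ((n / q : ℕ) : ℝ) else 0) := by
        rw [← ih (n / q) (Nat.div_lt_self hn (by omega)) K' hdivlt, Finset.mul_sum]
        exact Finset.sum_congr rfl fun j _ => by ring
      have e4 : ∑ j ∈ Finset.range (q ^ K'),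
          (Cq q (n / q) j : ℝ) * (-1) ^ (digitSum q (n / q - j))
          = if n / q = 0 then 1 else 0 := sumE hq (n / q) K' hdivlt
      rw [e1, e2, e3, e4]
      have hdm := Nat.div_add_mod n q
      rcases lt_trichotomy (n % q) 1 with hb | hb | hb
      · -- n % q = 0
        have hb0 : n % q = 0 := by omega
        have hnq : q * (n / q) = n := Nat.mul_div_cancel' (Nat.dvd_of_mod_eq_zero hb0)
        have ha : 1 ≤ n / q := by
          rcases Nat.eq_zero_or_pos (n / q) with h0 | h0
          · rw [h0, Nat.mul_zero] at hnq
            omega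
          · exact h0
        rw [if_pos hb0, if_neg (show ¬ n / q = 0 by omega),
          if_neg (show ¬ n % q = 1 by omega)]
        simp only [mul_one, mul_zero, zero_mul, add_zero]
        by_cases hPa : ∃ k : ℕ, n / q = q ^ k
        · obtain ⟨k, hk⟩ := hPa
          rw [if_pos ⟨k, hk⟩, if_pos ⟨k + 1, by rw [pow_succ', ← hk, hnq]⟩]
          have hcast : ((q * (n / q) : ℕ) : ℝ) = (n : ℝ) := by
            exact_mod_cast congrArg (Nat.cast (R := ℝ)) hnq
          push_cast at hcast
          exact hcast
        · rw [if_neg hPa, if_neg, mul_zero]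
          rintro ⟨k, hk⟩
          cases k with
          | zero =>
            simp only [pow_zero] at hk
            have h2 : 2 * 1 ≤ q * (n / q) := Nat.mul_le_mul hq ha
            omega
          | succ k =>
            refine hPa ⟨k, ?_⟩
            rw [hk, pow_succ, Nat.mul_div_cancel _ (by omega)]
      · -- n % q = 1
        rw [if_neg (show ¬ n % q = 0 by omega), if_pos hb]
        simp only [mul_one, mul_zero, zero_mul, zero_add]
        rcases Nat.eq_zero_or_pos (n / q) with ha | ha
        · have hn1 : n = 1 := by
            rw [ha, Nat.mul_zero] at hdm
            omega
          rw [if_pos ha, if_pos ⟨0, by rw [pow_zero]; omega⟩, hn1]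
          norm_num
        · rw [if_neg (show ¬ n / q = 0 by omega), if_neg]
          rintro ⟨k, hk⟩
          cases k with
          | zero =>
            have h1 : n = 1 := by simpa using hk
            have h2 : n / q = 0 := by rw [h1]; exact Nat.div_eq_of_lt (by omega)
            omega
          | succ k =>
            have : n % q = 0 := by rw [hk, pow_succ, Nat.mul_mod_left]
            omega
      · -- n % q ≥ 2
        rw [if_neg (show ¬ n % q = 0 by omega), if_neg (show ¬ n % q = 1 by omega)]
        simp only [mul_zero, zero_mul, add_zero, zero_add]
        rw [if_neg]
        rintro ⟨k, hk⟩
        cases k with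
        | zero =>
          have h1 : n = 1 := by simpa using hk
          have : n % q = 1 % q := by rw [h1]
          rw [Nat.mod_eq_of_lt (by omega)] at this
          omega
        | succ k =>
          have : n % q = 0 := by rw [hk, pow_succ, Nat.mul_mod_left]
          omega

open scoped Classical in
/-- Row sums of fractal binomial coefficients: `Σ_{m=0}^n C_q(n,m) = 2^{{n}}`, and the
signed weighted sum `Σ_{m=0}^n C_q(n,m)·m·(−1)^{{n−m}}` equals `q^k` if `n = q^k` and `0`
if `n` is not a power of `q`. -/
theorem stmt19 (q : ℕ) (hq : 2 ≤ q) (n : ℕ) (hn : 1 ≤ n) :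
    (∑ m ∈ Finset.range (n + 1), Cq q n m) = 2 ^ digitSum q n ∧
    (∑ m ∈ Finset.range (n + 1),
        (Cq q n m : ℝ) * m * (-1 : ℝ) ^ digitSum q (n - m)) =
      if ∃ k : ℕ, n = q ^ k then (n : ℝ) else 0 := by
  have hlt : n < q ^ n := Nat.lt_pow_self (by omega)
  constructor
  · rw [← sumA hq n n hlt]
    refine Finset.sum_subset (Finset.range_subset_range.2 (by omega)) fun m hm hnm => ?_
    simp only [Finset.mem_range, not_lt] at hnm
    exact Cq_eq_zero hq n m (by omega)
  · rw [← sumB hq n n hlt]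
    refine Finset.sum_subset (Finset.range_subset_range.2 (by omega)) fun m hm hnm => ?_
    simp only [Finset.mem_range, not_lt] at hnm
    rw [Cq_eq_zero hq n m (by omega)]
    simp
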